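/- arXiv:2006.04925 — 3 statements merged into one kernel-verified Lean document; each statement's English description precedes it below -/
import Mathlib

section
/- For every α > 0 there exists δ > 0 such that every measurable set E ⊆ ℂ with spherical area ∫_E (1+‖w‖²)⁻² dλ(w) ≥ α contains three points a, b, c ∈ E whose pairwise chordal distances satisfy min{σ(a,b), σ(a,c), σ(b,c)} ≥ δ. -/
open MeasureTheory
open scoped ENNReal NNReal

/-- The chordal (spherical) distance between two points of `ℂ`. -/
noncomputable def chordal (a b : ℂ) : ℝ :=
  ‖a - b‖ / (Real.sqrt (1 + ‖a‖ ^ 2) * Real.sqrt (1 + ‖b‖ ^ 2))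

lemma f_integrable : Integrable (fun w : ℂ => ((1 + ‖w‖ ^ 2) ^ 2)⁻¹) volume := by
  have h := integrable_rpow_neg_one_add_norm_sq (E := ℂ) (μ := volume) (r := 4)
    (by norm_num [Complex.finrank_real_complex])
  convert h using 2 with w
  have h1 : (0:ℝ) < 1 + ‖w‖ ^ 2 := by positivity
  rw [show (-4/2 : ℝ) = -2 by norm_num, Real.rpow_neg h1.le,
    show (2:ℝ) = ((2:ℕ):ℝ) by norm_num, Real.rpow_natCast]

lemma chordal_cont (a : ℂ) : Continuous (fun w => chordal a w) := by
  unfold chordal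
  apply Continuous.div
  · fun_prop
  · fun_prop
  · intro w
    have h1 : (0:ℝ) < Real.sqrt (1 + ‖a‖ ^ 2) := Real.sqrt_pos.mpr (by positivity)
    have h2 : (0:ℝ) < Real.sqrt (1 + ‖w‖ ^ 2) := Real.sqrt_pos.mpr (by positivity)
    positivity

lemma tail_small {ε : ℝ} (hε : 0 < ε) :
    ∃ r : ℝ, 0 ≤ r ∧
      ∫ w in (Metric.closedBall (0:ℂ) r)ᶜ, ((1 + ‖w‖ ^ 2) ^ 2)⁻¹ ≤ ε := by
  set f : ℂ → ℝ := fun w => ((1 + ‖w‖ ^ 2) ^ 2)⁻¹ with hf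
  have hU : (⋃ n : ℕ, Metric.closedBall (0:ℂ) n) = Set.univ := by
    ext x
    simp only [Set.mem_iUnion, Metric.mem_closedBall, Set.mem_univ, iff_true]
    obtain ⟨n, hn⟩ := exists_nat_ge ‖x‖
    exact ⟨n, by simpa [Complex.dist_eq] using hn⟩
  have htendsto : Filter.Tendsto (fun n : ℕ => ∫ w in Metric.closedBall (0:ℂ) n, f w)
      Filter.atTop (nhds (∫ w, f w)) := by
    have := tendsto_setIntegral_of_monotone (μ := volume) (f := f)
      (s := fun n : ℕ => Metric.closedBall (0:ℂ) n)
      (fun n => measurableSet_closedBall)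
      (fun m n hmn => Metric.closedBall_subset_closedBall (by exact_mod_cast hmn))
      (by rw [hU]; exact f_integrable.integrableOn)
    rwa [hU, setIntegral_univ] at this
  have : ∀ᶠ n : ℕ in Filter.atTop, (∫ w, f w) - ε < ∫ w in Metric.closedBall (0:ℂ) n, f w := by
    apply htendsto.eventually_const_lt
    linarith
  obtain ⟨n, hn⟩ := this.exists
  refine ⟨n, Nat.cast_nonneg n, ?_⟩
  have hsplit := integral_add_compl (μ := volume) (measurableSet_closedBall
    (x := (0:ℂ)) (ε := (n:ℝ))) f_integrable
  have : ∫ w in (Metric.closedBall (0:ℂ) (n:ℝ))ᶜ, f w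
      = (∫ w, f w) - ∫ w in Metric.closedBall (0:ℂ) (n:ℝ), f w := by linarith
  rw [this]; linarith

lemma sqrt_one_add_sq_le (t : ℝ) (ht : 0 ≤ t) : Real.sqrt (1 + t ^ 2) ≤ 1 + t := by
  rw [show (1:ℝ) + t = Real.sqrt ((1+t)^2) from (Real.sqrt_sq (by linarith)).symm]
  apply Real.sqrt_le_sqrt; nlinarith

lemma geom_key {r δ : ℝ} (hr : 0 ≤ r) (hδ' : δ * Real.sqrt (1 + r ^ 2) ≤ 1/2)
    {a w : ℂ} (hw : ‖w‖ ≤ r) (hc : chordal a w ≤ δ) (hδ0 : 0 ≤ δ) :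
    ‖w - a‖ ≤ δ * Real.sqrt (1 + r ^ 2) * Real.sqrt (1 + (2*r+1) ^ 2) := by
  have sa0 : (0:ℝ) < Real.sqrt (1 + ‖a‖ ^ 2) := Real.sqrt_pos.mpr (by positivity)
  have sw0 : (0:ℝ) < Real.sqrt (1 + ‖w‖ ^ 2) := Real.sqrt_pos.mpr (by positivity)
  have hnum : ‖a - w‖ ≤ δ * (Real.sqrt (1 + ‖a‖ ^ 2) * Real.sqrt (1 + ‖w‖ ^ 2)) := by
    have := (div_le_iff₀ (by positivity)).mp hc
    linarith [this]
  have hsw : Real.sqrt (1 + ‖w‖ ^ 2) ≤ Real.sqrt (1 + r ^ 2) := by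
    apply Real.sqrt_le_sqrt; nlinarith [norm_nonneg w]
  have hsa : Real.sqrt (1 + ‖a‖ ^ 2) ≤ 1 + ‖a‖ := sqrt_one_add_sq_le _ (norm_nonneg a)
  have hprod : Real.sqrt (1 + ‖a‖ ^ 2) * Real.sqrt (1 + ‖w‖ ^ 2)
      ≤ (1 + ‖a‖) * Real.sqrt (1 + r ^ 2) :=
    mul_le_mul hsa hsw sw0.le (by linarith [norm_nonneg a])
  have hbound : ‖a - w‖ ≤ δ * Real.sqrt (1 + r ^ 2) * (1 + ‖a‖) := by
    have h2 := mul_le_mul_of_nonneg_left hprod hδ0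
    nlinarith [hnum, h2]
  have ha : ‖a‖ ≤ 2*r + 1 := by
    have h1 : ‖a‖ ≤ ‖w‖ + ‖a - w‖ := by
      have := norm_sub_norm_le a w
      linarith
    have h2 : δ * Real.sqrt (1 + r ^ 2) * (1 + ‖a‖) ≤ (1 + ‖a‖)/2 := by
      have : (0:ℝ) ≤ 1 + ‖a‖ := by linarith [norm_nonneg a]
      nlinarith
    linarith
  have hsa2 : Real.sqrt (1 + ‖a‖ ^ 2) ≤ Real.sqrt (1 + (2*r+1) ^ 2) := by
    apply Real.sqrt_le_sqrt; nlinarith [norm_nonneg a]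
  have hprod2 : Real.sqrt (1 + ‖a‖ ^ 2) * Real.sqrt (1 + ‖w‖ ^ 2)
      ≤ Real.sqrt (1 + (2*r+1) ^ 2) * Real.sqrt (1 + r ^ 2) :=
    mul_le_mul hsa2 hsw sw0.le (Real.sqrt_nonneg _)
  have h3 := mul_le_mul_of_nonneg_left hprod2 hδ0
  rw [norm_sub_rev]
  nlinarith [hnum, h3]

theorem stmt_3 (α : ℝ) (hα : 0 < α) :
    ∃ δ > (0 : ℝ), ∀ E : Set ℂ, MeasurableSet E →
      α ≤ ∫ w in E, ((1 + ‖w‖ ^ 2) ^ 2)⁻¹ →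
      ∃ a ∈ E, ∃ b ∈ E, ∃ c ∈ E,
        δ ≤ min (chordal a b) (min (chordal a c) (chordal b c)) := by
  set f : ℂ → ℝ := fun w => ((1 + ‖w‖ ^ 2) ^ 2)⁻¹ with hfdef
  have hf0 : ∀ w, 0 ≤ f w := fun w => by positivity
  have hf1 : ∀ w, f w ≤ 1 := fun w => by
    have h : (1:ℝ) ≤ (1 + ‖w‖ ^ 2) ^ 2 := by nlinarith [norm_nonneg w, sq_nonneg ‖w‖]
    exact inv_le_one_of_one_le₀ h
  obtain ⟨r, hr0, hrtail⟩ := tail_small (ε := α/8) (by linarith)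
  set K := Real.sqrt (1 + r ^ 2) * Real.sqrt (1 + (2*r+1) ^ 2) with hK
  have hK1 : (0:ℝ) < Real.sqrt (1 + r ^ 2) := Real.sqrt_pos.mpr (by positivity)
  have hK2 : (0:ℝ) < Real.sqrt (1 + (2*r+1) ^ 2) := Real.sqrt_pos.mpr (by positivity)
  have hKpos : 0 < K := mul_pos hK1 hK2
  set δ : ℝ := min (1 / (2 * Real.sqrt (1 + r ^ 2))) (Real.sqrt (α / (8 * Real.pi)) / K)
    with hδdef
  have hδpos : 0 < δ := by
    apply lt_min
    · positivity
    · apply div_pos _ hKpos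
      apply Real.sqrt_pos.mpr
      positivity
  have hδhalf : δ * Real.sqrt (1 + r ^ 2) ≤ 1/2 := by
    have h := min_le_left (1 / (2 * Real.sqrt (1 + r ^ 2))) (Real.sqrt (α / (8 * Real.pi)) / K)
    rw [← hδdef] at h
    calc δ * Real.sqrt (1 + r ^ 2) ≤ (1 / (2 * Real.sqrt (1 + r ^ 2))) * Real.sqrt (1 + r ^ 2) := by
          gcongr
    _ = 1/2 := by field_simp
  set ρ : ℝ := δ * Real.sqrt (1 + r ^ 2) * Real.sqrt (1 + (2*r+1) ^ 2) with hρdef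
  have hρpos : 0 < ρ := by positivity
  have hρle : ρ ≤ Real.sqrt (α / (8 * Real.pi)) := by
    have h := min_le_right (1 / (2 * Real.sqrt (1 + r ^ 2))) (Real.sqrt (α / (8 * Real.pi)) / K)
    rw [← hδdef] at h
    calc ρ = δ * K := by rw [hρdef, hK]; ring
    _ ≤ (Real.sqrt (α / (8 * Real.pi)) / K) * K := by gcongr
    _ = Real.sqrt (α / (8 * Real.pi)) := by field_simp
  -- volume bound for the Euclidean ball of radius ρ
  have hvol : ∀ a : ℂ, (volume (Metric.closedBall a ρ)).toReal ≤ α / 8 := by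
    intro a
    rw [Complex.volume_closedBall]
    rw [ENNReal.toReal_mul, ENNReal.toReal_pow, ENNReal.toReal_ofReal hρpos.le]
    have : ρ ^ 2 ≤ α / (8 * Real.pi) := by
      calc ρ ^ 2 ≤ Real.sqrt (α / (8 * Real.pi)) ^ 2 := by gcongr
      _ = α / (8 * Real.pi) := Real.sq_sqrt (by positivity)
    calc ρ ^ 2 * (NNReal.pi : ℝ≥0∞).toReal = ρ ^ 2 * Real.pi := by
          simp
    _ ≤ (α / (8 * Real.pi)) * Real.pi := by
          gcongr
    _ = α / 8 := by field_simp
  -- ball integral bound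
  have hball : ∀ a : ℂ, ∫ w in {w : ℂ | chordal a w ≤ δ}, f w ≤ α / 4 := by
    intro a
    have hBmeas : MeasurableSet {w : ℂ | chordal a w ≤ δ} :=
      (isClosed_le (chordal_cont a) continuous_const).measurableSet
    have hsub : {w : ℂ | chordal a w ≤ δ} ⊆
        Metric.closedBall a ρ ∪ (Metric.closedBall (0:ℂ) r)ᶜ := by
      intro w hw
      by_cases hwr : ‖w‖ ≤ r
      · left
        rw [Metric.mem_closedBall, dist_eq_norm]
        exact geom_key hr0 hδhalf hwr hw hδpos.le
      · right
        simp only [Set.mem_compl_iff, Metric.mem_closedBall, dist_zero_right, not_le]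
        exact lt_of_not_ge hwr
    have hint1 : ∫ w in Metric.closedBall a ρ, f w ≤ α / 8 := by
      calc ∫ w in Metric.closedBall a ρ, f w ≤ ∫ x in Metric.closedBall a ρ, (1:ℝ) := by
            apply setIntegral_mono f_integrable.integrableOn
              (integrableOn_const measure_closedBall_lt_top.ne) hf1
      _ = (volume (Metric.closedBall a ρ)).toReal := by rw [setIntegral_const, smul_eq_mul, mul_one]; rfl
      _ ≤ α / 8 := hvol a
    calc ∫ w in {w : ℂ | chordal a w ≤ δ}, f w
        ≤ ∫ w in Metric.closedBall a ρ ∪ (Metric.closedBall (0:ℂ) r)ᶜ, f w := by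
          apply setIntegral_mono_set f_integrable.integrableOn
            (Filter.Eventually.of_forall hf0) (Filter.Eventually.of_forall hsub)
    _ ≤ (∫ w in Metric.closedBall a ρ, f w) + ∫ w in (Metric.closedBall (0:ℂ) r)ᶜ, f w := by
          have : Metric.closedBall a ρ ∪ (Metric.closedBall (0:ℂ) r)ᶜ
              = Metric.closedBall a ρ ∪ ((Metric.closedBall (0:ℂ) r)ᶜ \ Metric.closedBall a ρ) :=
            (Set.union_diff_self).symm
          rw [this, setIntegral_union (Set.disjoint_sdiff_right)
            ((measurableSet_closedBall.compl).diff measurableSet_closedBall)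
            f_integrable.integrableOn f_integrable.integrableOn]
          gcongr _ + ?_
          apply setIntegral_mono_set f_integrable.integrableOn
            (Filter.Eventually.of_forall hf0)
            (Filter.Eventually.of_forall Set.diff_subset)
    _ ≤ α / 8 + α / 8 := by gcongr
    _ = α / 4 := by ring
  refine ⟨δ, hδpos, fun E hE hEα => ?_⟩
  by_contra hcon
  push_neg at hcon
  obtain hEe | ⟨a, ha⟩ := E.eq_empty_or_nonempty
  · rw [hEe] at hEα
    simp at hEα
    linarith
  by_cases hb : ∃ b ∈ E, δ ≤ chordal a b
  · obtain ⟨b, hbE, hab⟩ := hb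
    have hcover : E ⊆ {w : ℂ | chordal a w ≤ δ} ∪ {w : ℂ | chordal b w ≤ δ} := by
      intro c hc
      have h := hcon a ha b hbE c hc
      rw [min_lt_iff] at h
      rcases h with h | h
      · linarith
      rw [min_lt_iff] at h
      rcases h with h | h
      · left; exact le_of_lt h
      · right; exact le_of_lt h
    have : α ≤ α / 2 := by
      calc α ≤ ∫ w in E, f w := hEα
      _ ≤ ∫ w in {w : ℂ | chordal a w ≤ δ} ∪ {w : ℂ | chordal b w ≤ δ}, f w := by
          apply setIntegral_mono_set f_integrable.integrableOn
            (Filter.Eventually.of_forall hf0) (Filter.Eventually.of_forall hcover)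
      _ ≤ (∫ w in {w : ℂ | chordal a w ≤ δ}, f w) + ∫ w in {w : ℂ | chordal b w ≤ δ}, f w := by
          have hBb : MeasurableSet {w : ℂ | chordal b w ≤ δ} :=
            (isClosed_le (chordal_cont b) continuous_const).measurableSet
          have hBa : MeasurableSet {w : ℂ | chordal a w ≤ δ} :=
            (isClosed_le (chordal_cont a) continuous_const).measurableSet
          rw [(Set.union_diff_self (s := {w : ℂ | chordal a w ≤ δ})).symm,
            setIntegral_union (Set.disjoint_sdiff_right) (hBb.diff hBa)
            f_integrable.integrableOn f_integrable.integrableOn]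
          gcongr _ + ?_
          apply setIntegral_mono_set f_integrable.integrableOn
            (Filter.Eventually.of_forall hf0)
            (Filter.Eventually.of_forall Set.diff_subset)
      _ ≤ α / 4 + α / 4 := by gcongr; exacts [hball a, hball b]
      _ = α / 2 := by ring
    linarith
  · push_neg at hb
    have hcover : E ⊆ {w : ℂ | chordal a w ≤ δ} := fun c hc => le_of_lt (hb c hc)
    have : α ≤ α / 4 := by
      calc α ≤ ∫ w in E, f w := hEα
      _ ≤ ∫ w in {w : ℂ | chordal a w ≤ δ}, f w := by
          apply setIntegral_mono_set f_integrable.integrableOn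
            (Filter.Eventually.of_forall hf0) (Filter.Eventually.of_forall hcover)
      _ ≤ α / 4 := hball a
    linarith
end

section
/- Let α > 0 and let E ⊆ ℂ be a measurable set with Lebesgue measure λ(E) ≥ α. Then there exist three points a, b, c ∈ E whose pairwise Euclidean distances satisfy min{‖a−b‖, ‖a−c‖, ‖b−c‖} ≥ Real.sqrt (α/(2π)). -/
open MeasureTheory Metric Set

private lemma ball_vol (α : ℝ) (hα : 0 < α) (x : ℂ) :
    volume (Metric.ball x (Real.sqrt (α / (2 * Real.pi)))) = ENNReal.ofReal (α / 2) := by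
  rw [Complex.volume_ball]
  rw [← ENNReal.ofReal_pow (Real.sqrt_nonneg _), Real.sq_sqrt (by positivity)]
  rw [← ENNReal.ofReal_coe_nnreal, NNReal.coe_real_pi,
    ← ENNReal.ofReal_mul (by positivity)]
  congr 1
  field_simp

theorem stmt_4 (α : ℝ) (hα : 0 < α) (E : Set ℂ) (hE : MeasurableSet E)
    (hmeas : ENNReal.ofReal α ≤ volume E) :
    ∃ a ∈ E, ∃ b ∈ E, ∃ c ∈ E,
      Real.sqrt (α / (2 * Real.pi)) ≤ min ‖a - b‖ (min ‖a - c‖ ‖b - c‖) := by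
  set r : ℝ := Real.sqrt (α / (2 * Real.pi)) with hr_def
  have hr : 0 < r := Real.sqrt_pos.2 (by positivity)
  have hvol : ∀ x : ℂ, volume (Metric.ball x r) = ENNReal.ofReal (α / 2) :=
    fun x => ball_vol α hα x
  have hhalf : ENNReal.ofReal (α / 2) < ENNReal.ofReal α :=
    ENNReal.ofReal_lt_ofReal_iff hα |>.2 (by linarith)
  -- E is nonempty
  have hEne : E.Nonempty := by
    apply nonempty_of_measure_ne_zero (μ := volume)
    intro h0
    rw [h0, le_zero_iff, ENNReal.ofReal_eq_zero] at hmeas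
    linarith
  obtain ⟨a, ha⟩ := hEne
  -- find b at distance ≥ r from a
  have hb : ∃ b ∈ E, r ≤ dist a b := by
    by_contra h
    push_neg at h
    have hsub : E ⊆ Metric.ball a r := fun x hx => by
      rw [Metric.mem_ball, dist_comm]; exact h x hx
    have := (measure_mono hsub).trans_eq (hvol a)
    exact absurd (hmeas.trans this) (not_le.2 hhalf)
  obtain ⟨b, hbE, hab⟩ := hb
  by_cases hcase : ∃ c ∈ E, r ≤ dist a c ∧ r ≤ dist b c
  · obtain ⟨c, hcE, h1, h2⟩ := hcase
    refine ⟨a, ha, b, hbE, c, hcE, ?_⟩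
    simp only [le_min_iff, ← dist_eq_norm]
    exact ⟨hab, h1, h2⟩
  -- otherwise E ⊆ ball a r ∪ ball b r
  push_neg at hcase
  have hsub : E ⊆ Metric.ball a r ∪ Metric.ball b r := by
    intro x hx
    rcases lt_or_ge (dist a x) r with h | h
    · left; rw [Metric.mem_ball, dist_comm]; exact h
    · right; rw [Metric.mem_ball, dist_comm]
      exact hcase x hx h
  set U := Metric.ball a r ∪ Metric.ball b r with hU_def
  have hUvol_le : volume U ≤ ENNReal.ofReal α := by
    calc volume U ≤ volume (Metric.ball a r) + volume (Metric.ball b r) := measure_union_le _ _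
    _ = ENNReal.ofReal (α / 2) + ENNReal.ofReal (α / 2) := by rw [hvol, hvol]
    _ = ENNReal.ofReal α := by
        rw [← ENNReal.ofReal_add (by positivity) (by positivity)]; norm_num
  have hUvol : volume U = ENNReal.ofReal α :=
    le_antisymm hUvol_le (hmeas.trans (measure_mono hsub))
  -- intersection of the two balls is null
  have hinter : volume (Metric.ball a r ∩ Metric.ball b r) = 0 := by
    have hkey := measure_union_add_inter (μ := volume) (Metric.ball a r)
      (measurableSet_ball (x := b) (ε := r))
    rw [← hU_def, hUvol, hvol, hvol, ← ENNReal.ofReal_add (by positivity) (by positivity)] at hkey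
    have heq : ENNReal.ofReal (α / 2 + α / 2) = ENNReal.ofReal α := by norm_num
    rw [heq] at hkey
    exact (ENNReal.add_right_inj ENNReal.ofReal_ne_top).1 (hkey.trans (add_zero _).symm)
  -- hence the balls are disjoint: 2r ≤ dist a b
  have hab2 : 2 * r ≤ dist a b := by
    by_contra h
    push_neg at h
    set m := midpoint ℝ a b with hm_def
    have hma : dist m a = dist a b / 2 := by
      rw [hm_def, dist_midpoint_left, Real.norm_two]; ring
    have hmb : dist m b = dist a b / 2 := by
      rw [hm_def, dist_midpoint_right, Real.norm_two]; ring
    have hball : Metric.ball m (r - dist a b / 2) ⊆ Metric.ball a r ∩ Metric.ball b r := by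
      intro y hy
      rw [Metric.mem_ball] at hy
      constructor
      · rw [Metric.mem_ball]
        calc dist y a ≤ dist y m + dist m a := dist_triangle _ _ _
        _ < (r - dist a b / 2) + dist a b / 2 := by rw [hma]; linarith
        _ = r := by ring
      · rw [Metric.mem_ball]
        calc dist y b ≤ dist y m + dist m b := dist_triangle _ _ _
        _ < (r - dist a b / 2) + dist a b / 2 := by rw [hmb]; linarith
        _ = r := by ring
    have hpos : 0 < volume (Metric.ball m (r - dist a b / 2)) :=
      measure_ball_pos volume m (by linarith)
    exact absurd (le_antisymm ((measure_mono hball).trans_eq hinter) zero_le) hpos.ne'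
  -- volume of E inside U is full
  have hEvol : volume E = ENNReal.ofReal α :=
    le_antisymm ((measure_mono hsub).trans_eq hUvol) hmeas
  have hdiff : volume (U \ E) = 0 := by
    rw [measure_diff hsub hE.nullMeasurableSet (by rw [hEvol]; exact ENNReal.ofReal_ne_top),
      hUvol, hEvol, tsub_self]
  -- any nonempty open subset of U meets E
  have hmeet : ∀ S : Set ℂ, IsOpen S → S.Nonempty → S ⊆ U → (E ∩ S).Nonempty := by
    intro S hSo hSne hSU
    by_contra h
    rw [Set.not_nonempty_iff_eq_empty] at h
    have : S ⊆ U \ E := fun x hx => ⟨hSU hx, fun hxE => by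
      exact absurd (Set.mem_inter hxE hx) (h ▸ Set.notMem_empty x)⟩
    exact absurd (le_antisymm ((measure_mono this).trans_eq hdiff) zero_le)
      (hSo.measure_pos volume hSne).ne'
  -- geometric setup
  have hd : 0 < dist a b := by linarith
  have hba : b - a ≠ 0 := by
    rw [sub_ne_zero]
    intro h
    rw [h, dist_self] at hd
    exact lt_irrefl 0 hd
  set d : ℝ := dist a b with hd_def
  have hdnorm : ‖b - a‖ = d := by rw [hd_def, dist_eq_norm, norm_sub_rev]
  set u : ℂ := (b - a) / (d : ℂ) with hu_def
  have hdC : (d : ℂ) ≠ 0 := by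
    simp only [ne_eq, Complex.ofReal_eq_zero]
    exact hd.ne'
  have hu_norm : ‖u‖ = 1 := by
    rw [hu_def, norm_div, hdnorm, Complex.norm_real, Real.norm_of_nonneg hd.le, div_self hd.ne']
  have hdu : (d : ℂ) * u = b - a := by
    rw [hu_def, mul_div_cancel₀ _ hdC]
  set x₁ : ℂ := b + r * u with hx1_def
  set x₂ : ℂ := b + (r / 2) * (u * Complex.I) with hx2_def
  set ε : ℝ := r / 20 with hε_def
  have hε : 0 < ε := by positivity
  -- x₁ - a = (d + r) u
  have hx1a : ‖x₁ - a‖ = d + r := by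
    have : x₁ - a = ((d : ℂ) + r) * u := by
      rw [hx1_def]; rw [add_mul, hdu]; ring
    rw [this, norm_mul, hu_norm, mul_one, ← Complex.ofReal_add, Complex.norm_real,
      Real.norm_of_nonneg (by linarith)]
  -- x₂ - a = u * (d + (r/2) I)
  have hx2a : 2 * r ≤ ‖x₂ - a‖ := by
    have hrw : x₂ - a = u * ((d : ℂ) + (r : ℂ) / 2 * Complex.I) := by
      rw [hx2_def]
      have : (b : ℂ) = a + (d : ℂ) * u := by rw [hdu]; ring
      rw [this]; ring
    rw [hrw, norm_mul, hu_norm, one_mul]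
    have : d ≤ ‖(d : ℂ) + (r : ℂ) / 2 * Complex.I‖ := by
      have h := Complex.abs_re_le_norm ((d : ℂ) + (r : ℂ) / 2 * Complex.I)
      have hre : ((d : ℂ) + (r : ℂ) / 2 * Complex.I).re = d := by
        simp [Complex.add_re, Complex.div_re]
      rw [hre, abs_of_pos hd] at h
      exact h
    linarith
  have hx12 : 1.1 * r ≤ ‖x₁ - x₂‖ := by
    have hrw : x₁ - x₂ = u * ((r : ℂ) - (r : ℂ) / 2 * Complex.I) := by
      rw [hx1_def, hx2_def]; ring
    rw [hrw, norm_mul, hu_norm, one_mul]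
    have hsq : ‖(r : ℂ) - (r : ℂ) / 2 * Complex.I‖ ^ 2 = r ^ 2 + (r / 2) ^ 2 := by
      rw [Complex.sq_norm, Complex.normSq_apply]
      simp [Complex.sub_re, Complex.sub_im, Complex.mul_re, Complex.mul_im, Complex.div_re,
        Complex.div_im]
      ring
    nlinarith [norm_nonneg ((r : ℂ) - (r : ℂ) / 2 * Complex.I), sq_nonneg r]
  -- find b' near x₁ and c near x₂, in E
  have hS1 : (E ∩ (Metric.ball x₁ ε ∩ Metric.ball b r)).Nonempty := by
    apply hmeet _ (isOpen_ball.inter isOpen_ball)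
    · refine ⟨b + (r - ε / 2) * u, ?_, ?_⟩
      · rw [Metric.mem_ball, dist_eq_norm]
        have : b + (r - ε / 2) * u - x₁ = -(((ε : ℂ) / 2) * u) := by
          rw [hx1_def]; push_cast; ring
        rw [this, norm_neg, norm_mul, hu_norm, mul_one]
        have : ‖(ε : ℂ) / 2‖ = ε / 2 := by
          rw [norm_div, Complex.norm_real, Real.norm_of_nonneg hε.le]
          norm_num
        rw [this]
        linarith
      · rw [Metric.mem_ball, dist_eq_norm]
        have : b + (r - ε / 2) * u - b = ((r - ε / 2 : ℝ)) * u := by push_cast; ring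
        rw [this, norm_mul, hu_norm, mul_one, Complex.norm_real,
          Real.norm_of_nonneg (by rw [hε_def] at *; linarith)]
        rw [hε_def]; linarith
    · exact fun x hx => Or.inr hx.2
  have hS2 : (E ∩ Metric.ball x₂ ε).Nonempty := by
    apply hmeet _ isOpen_ball ⟨x₂, Metric.mem_ball_self hε⟩
    intro x hx
    right
    rw [Metric.mem_ball] at hx ⊢
    calc dist x b ≤ dist x x₂ + dist x₂ b := dist_triangle _ _ _
    _ < ε + dist x₂ b := by linarith
    _ ≤ ε + r / 2 := by
        have : dist x₂ b = r / 2 := by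
          rw [dist_eq_norm, hx2_def]
          have : b + (r : ℂ) / 2 * (u * Complex.I) - b = (r : ℂ) / 2 * (u * Complex.I) := by
            ring
          rw [this, norm_mul, norm_mul, hu_norm, Complex.norm_I, norm_div, Complex.norm_real,
            Real.norm_of_nonneg hr.le]
          norm_num
        linarith
    _ < r := by rw [hε_def]; linarith
  obtain ⟨b', hb'E, hb'1, _⟩ := hS1
  obtain ⟨c, hcE, hc2⟩ := hS2
  rw [Metric.mem_ball] at hb'1 hc2
  refine ⟨a, ha, b', hb'E, c, hcE, ?_⟩
  simp only [le_min_iff, ← dist_eq_norm]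
  have hab' : r ≤ dist a b' := by
    have := dist_triangle a b' x₁
    have h1 : dist a x₁ = d + r := by rw [dist_eq_norm, norm_sub_rev, hx1a]
    have h2 : dist b' x₁ < ε := hb'1
    rw [hε_def] at h2
    have : 2 * r ≤ d := hab2
    linarith [dist_triangle a x₁ b', dist_comm x₁ b' ▸ h2]
  have hac : r ≤ dist a c := by
    have h1 : 2 * r ≤ dist a x₂ := by rw [dist_eq_norm, norm_sub_rev]; exact hx2a
    have := dist_triangle a c x₂
    have h2 : dist c x₂ < ε := hc2
    rw [hε_def] at h2
    linarith [dist_triangle a x₂ c, dist_comm x₂ c ▸ h2]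
  have hbc : r ≤ dist b' c := by
    have h1 : 1.1 * r ≤ dist x₁ x₂ := by rw [dist_eq_norm]; exact hx12
    have h2 : dist b' x₁ < ε := hb'1
    have h3 : dist c x₂ < ε := hc2
    rw [hε_def] at h2 h3
    have := dist_triangle x₁ b' c
    have := dist_triangle b' c x₂
    have h4 : dist x₁ x₂ ≤ dist x₁ b' + dist b' c + dist c x₂ := by
      have t1 := dist_triangle x₁ b' x₂
      have t2 := dist_triangle b' c x₂
      linarith
    rw [dist_comm x₁ b'] at h4
    linarith
  exact ⟨hab', hac, hbc⟩
end

section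
/- Let P be a nonconstant polynomial over ℂ of degree m = P.natDegree ≥ 1, and let f(z) := P.eval z. Then (1/π)·∫_ℂ (f^♯(z))² dλ(z) ≤ m, i.e. ∫_ℂ (‖deriv f z‖ / (1 + ‖f z‖²))² dλ(z) ≤ m·π. (In particular, for f_n = n·P with P of degree m having m distinct zeros in the unit disk — the example showing the order bound in the quasi-normality theorem is sharp — the spherical-area bound holds with C = m.) -/
open MeasureTheory Set
open scoped ENNReal NNReal

/-- The spherical derivative of `f : ℂ → ℂ`. -/
noncomputable def sphDeriv (f : ℂ → ℂ) (z : ℂ) : ℝ :=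
  ‖deriv f z‖ / (1 + ‖f z‖ ^ 2)

namespace SphAux

noncomputable def gE (w : ℂ) : ℝ≥0∞ := ENNReal.ofReal (1 / (1 + ‖w‖ ^ 2) ^ 2)

lemma integrable_g : Integrable (fun w : ℂ => 1 / (1 + ‖w‖ ^ 2) ^ 2) := by
  have h := integrable_rpow_neg_one_add_norm_sq (E := ℂ) (μ := (volume : Measure ℂ)) (r := 4)
    (by simp [Complex.finrank_real_complex]; norm_num)
  refine h.congr (Filter.Eventually.of_forall (fun w => ?_))
  have h1 : (0:ℝ) < 1 + ‖w‖ ^ 2 := by positivity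
  show (1 + ‖w‖ ^ 2) ^ (-(4:ℝ)/2) = 1 / (1 + ‖w‖ ^ 2) ^ 2
  rw [show (-(4:ℝ)/2) = -2 by norm_num, Real.rpow_neg h1.le, Real.rpow_two, one_div]

lemma integral_r : ∫ r in Ioi (0:ℝ), r / (1 + r ^ 2) ^ 2 = 1 / 2 := by
  have hd : ∀ r ∈ Ici (0:ℝ),
      HasDerivAt (fun r : ℝ => -(1/2) * (1 + r ^ 2)⁻¹) (r / (1 + r ^ 2) ^ 2) r := by
    intro r _
    have h1 : HasDerivAt (fun r : ℝ => 1 + r ^ 2) (2 * r) r := by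
      simpa using ((hasDerivAt_pow 2 r).const_add 1)
    have h2 := (h1.inv (by positivity)).const_mul (-(1/2 : ℝ))
    refine h2.congr_deriv ?_
    field_simp
  have hint : IntegrableOn (fun r : ℝ => r / (1 + r ^ 2) ^ 2) (Ioi 0) := by
    refine Integrable.mono (integrable_inv_one_add_sq.integrableOn (s := Ioi 0))
      (Continuous.aestronglyMeasurable
        (continuous_id.div (by continuity) (fun r => by positivity))).restrict ?_
    refine ae_restrict_of_forall_mem measurableSet_Ioi (fun r hr => ?_)
    have h1 : (0:ℝ) < 1 + r ^ 2 := by positivity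
    have h2 : r / (1 + r ^ 2) ^ 2 ≤ (1 + r ^ 2)⁻¹ := by
      rw [div_le_iff₀ (by positivity)]
      have h3 : (1 + r ^ 2)⁻¹ * (1 + r ^ 2) ^ 2 = 1 + r ^ 2 := by
        field_simp [sq]
      rw [h3]; nlinarith [le_of_lt (mem_Ioi.mp hr)]
    have hr0 : (0:ℝ) < r := mem_Ioi.mp hr
    rw [Real.norm_eq_abs, Real.norm_eq_abs, abs_of_nonneg (div_nonneg hr0.le (by positivity)),
      abs_of_nonneg (by positivity)]
    exact h2
  have htend : Filter.Tendsto (fun r : ℝ => -(1/2) * (1 + r ^ 2)⁻¹) Filter.atTop (nhds 0) := by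
    have h : Filter.Tendsto (fun r : ℝ => (1 + r ^ 2)⁻¹) Filter.atTop (nhds 0) := by
      apply Filter.Tendsto.inv_tendsto_atTop
      exact Filter.tendsto_atTop_add_const_left _ 1 (Filter.tendsto_pow_atTop two_ne_zero)
    simpa using h.const_mul (-(1/2 : ℝ))
  rw [integral_Ioi_of_hasDerivAt_of_tendsto' hd hint htend]
  norm_num

lemma integral_g : ∫ w : ℂ, 1 / (1 + ‖w‖ ^ 2) ^ 2 = Real.pi := by
  rw [← Complex.integral_comp_polarCoord_symm (fun w : ℂ => 1 / (1 + ‖w‖ ^ 2) ^ 2)]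
  simp only [Complex.norm_polarCoord_symm, sq_abs, smul_eq_mul]
  rw [polarCoord_target, Measure.volume_eq_prod]
  rw [show (fun p : ℝ × ℝ => p.1 * (1 / (1 + p.1 ^ 2) ^ 2)) = fun p : ℝ × ℝ =>
    (fun x : ℝ => x / (1 + x ^ 2) ^ 2) p.1 * (fun _ : ℝ => (1:ℝ)) p.2 by
      funext p
      show p.1 * (1 / (1 + p.1 ^ 2) ^ 2) = (p.1 / (1 + p.1 ^ 2) ^ 2) * 1
      ring]
  rw [setIntegral_prod_mul (fun x : ℝ => x / (1 + x ^ 2) ^ 2) (fun _ : ℝ => (1:ℝ))]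
  simp only [integral_r, integral_const, MeasurableSet.univ, Measure.restrict_apply,
    univ_inter, Real.volume_Ioo, smul_eq_mul, mul_one]
  simp only [Measure.real, Measure.restrict_apply MeasurableSet.univ, univ_inter, Real.volume_Ioo]
  rw [ENNReal.toReal_ofReal (by linarith [Real.pi_pos])]
  ring

lemma lintegral_gE : ∫⁻ w : ℂ, gE w = ENNReal.ofReal Real.pi := by
  unfold gE
  rw [← ofReal_integral_eq_lintegral_ofReal integrable_g
    (Filter.Eventually.of_forall (fun w => by positivity)), integral_g]

lemma measurable_gE : Measurable gE := by
  unfold gE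
  apply Measurable.ennreal_ofReal
  fun_prop (disch := intro w; positivity)

lemma det_clm (c : ℂ) :
    (((1 : ℂ →L[ℂ] ℂ).smulRight c).restrictScalars ℝ : ℂ →L[ℝ] ℂ).det = ‖c‖ ^ 2 := by
  rw [ContinuousLinearMap.det, ← LinearMap.det_toMatrix Complex.basisOneI, Matrix.det_fin_two]
  simp [LinearMap.toMatrix_apply, Complex.sq_norm, Complex.normSq_apply]

lemma hasFDerivAt_eval (P : Polynomial ℂ) (z : ℂ) :
    HasFDerivAt (fun w => P.eval w)
      (((1 : ℂ →L[ℂ] ℂ).smulRight (P.derivative.eval z)).restrictScalars ℝ) z :=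
  ((hasDerivAt_iff_hasFDerivAt.mp (P.hasDerivAt z))).restrictScalars ℝ

lemma exists_injOn (P : Polynomial ℂ) {z : ℂ} (hz : P.derivative.eval z ≠ 0) :
    ∃ U : Set ℂ, IsOpen U ∧ z ∈ U ∧ Set.InjOn (fun w => P.eval w) U := by
  have h := P.hasStrictDerivAt z
  have e := h.hasStrictFDerivAt_equiv hz
  refine ⟨(e.toOpenPartialHomeomorph _).source, (e.toOpenPartialHomeomorph _).open_source,
    e.mem_toOpenPartialHomeomorph_source, ?_⟩
  have := (e.toOpenPartialHomeomorph _).injOn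
  simpa using this

end SphAux

open SphAux

theorem stmt_14 (P : Polynomial ℂ) (hm : 1 ≤ P.natDegree) :
    ∫ z : ℂ, (sphDeriv (fun w => P.eval w) z) ^ 2 ≤ (P.natDegree : ℝ) * Real.pi := by
  classical
  set f : ℂ → ℂ := fun w => P.eval w with hfdef
  set m := P.natDegree with hmdef
  have hderiv : deriv f = fun z => P.derivative.eval z := by
    funext z; exact P.deriv
  have hcont : Continuous fun z => sphDeriv f z ^ 2 := by
    unfold sphDeriv
    rw [hderiv]
    exact (((P.derivative.continuous).norm.div
      (by continuity) (fun z => by positivity)).pow 2)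
  -- the Jacobian
  set F' : ℂ → (ℂ →L[ℝ] ℂ) :=
    fun z => ((1 : ℂ →L[ℂ] ℂ).smulRight (P.derivative.eval z)).restrictScalars ℝ with hF'def
  have hF : ∀ z, HasFDerivAt f (F' z) z := fun z => hasFDerivAt_eval P z
  set j : ℂ → ℝ≥0∞ := fun z => ENNReal.ofReal (‖P.derivative.eval z‖ ^ 2) with hjdef
  have hpoint : ∀ z, ENNReal.ofReal (sphDeriv f z ^ 2) = j z * gE (f z) := by
    intro z
    rw [hjdef]
    unfold sphDeriv gE
    rw [hderiv, ← ENNReal.ofReal_mul (by positivity)]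
    congr 1
    rw [div_pow, div_eq_mul_one_div]
  -- change of variables on injective pieces
  have KL : ∀ s : Set ℂ, MeasurableSet s → Set.InjOn f s →
      ∫⁻ z in s, j z * gE (f z) = ∫⁻ w in f '' s, gE w := by
    intro s hs hinj
    rw [lintegral_image_eq_lintegral_abs_det_fderiv_mul volume hs
      (fun x _ => (hF x).hasFDerivWithinAt) hinj gE]
    refine setLIntegral_congr_fun hs (fun z _ => ?_)
    rw [hjdef, hF'def]
    simp only
    rw [det_clm, abs_of_nonneg (by positivity)]
  -- critical set
  set A : Set ℂ := {z | P.derivative.eval z = 0} with hAdef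
  have hAmeas : MeasurableSet A :=
    (isClosed_eq (P.derivative.continuous) continuous_const).measurableSet
  have hPd : P.derivative ≠ 0 := by
    intro h
    have := Polynomial.natDegree_eq_zero_of_derivative_eq_zero h
    omega
  have hAfin : A.Finite := Polynomial.finite_setOf_isRoot hPd
  -- injectivity neighborhoods
  have hU : ∀ z : ℂ, ∃ U : Set ℂ, IsOpen U ∧ (z ∉ A → z ∈ U) ∧ Set.InjOn f U := by
    intro z
    by_cases hz : z ∈ A
    · exact ⟨∅, isOpen_empty, fun h => absurd hz h, Set.injOn_empty _⟩
    · obtain ⟨U, hUo, hzU, hinj⟩ := exists_injOn P hz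
      exact ⟨U, hUo, fun _ => hzU, hinj⟩
  choose u huo huz huinj using hU
  obtain ⟨T, hTc, hTu⟩ := TopologicalSpace.isOpen_iUnion_countable u huo
  have hAc : Aᶜ ⊆ ⋃ z ∈ T, u z := by
    rw [hTu]
    intro z hz
    exact Set.mem_iUnion.mpr ⟨z, huz z hz⟩
  have hTne : T.Nonempty := by
    obtain ⟨z, hz⟩ := hAfin.infinite_compl.nonempty
    obtain ⟨w, hw, -⟩ := Set.mem_iUnion₂.mp (hAc hz)
    exact ⟨w, hw⟩
  obtain ⟨e, hT⟩ := hTc.exists_eq_range hTne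
  set t : ℕ → Set ℂ := disjointed (fun n => u (e n)) with htdef
  have htm : ∀ n, MeasurableSet (t n) :=
    MeasurableSet.disjointed (fun n => (huo _).measurableSet)
  have htd : Pairwise (Function.onFun Disjoint t) := disjoint_disjointed _
  have htsub : ∀ n, t n ⊆ u (e n) := fun n => disjointed_subset _ _
  have hcover : Aᶜ ⊆ ⋃ n, t n := by
    rw [htdef, iUnion_disjointed]
    refine hAc.trans ?_
    rw [hT]
    rw [Set.biUnion_range]
  -- image sets
  set S : ℕ → Set ℂ := fun n => f '' t n with hSdef
  have hSmeas : ∀ n, MeasurableSet (S n) := fun n =>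
    measurable_image_of_fderivWithin (htm n) (fun x _ => (hF x).hasFDerivWithinAt)
      ((huinj (e n)).mono (htsub n))
  -- counting bound
  have hcount : ∀ w : ℂ, (∑' n, (S n).indicator (fun _ => (1:ℝ≥0∞)) w) ≤ m := by
    intro w
    have hne : P - Polynomial.C w ≠ 0 := by
      intro h
      have h2 : (P - Polynomial.C w).natDegree = m := Polynomial.natDegree_sub_C
      rw [h] at h2
      simp only [Polynomial.natDegree_zero] at h2
      omega
    set R := (P - Polynomial.C w).roots.toFinset with hRdef
    have hR : R.card ≤ m := by
      refine le_trans (Multiset.toFinset_card_le _) ?_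
      refine le_trans (Polynomial.card_roots' _) ?_
      rw [Polynomial.natDegree_sub_C]
    rw [ENNReal.tsum_eq_iSup_sum]
    refine iSup_le fun F => ?_
    set sel : ℕ → ℂ := fun n => if h : ∃ z, z ∈ t n ∧ f z = w then h.choose else 0 with hseldef
    have hsel : ∀ n, w ∈ S n → sel n ∈ t n ∧ f (sel n) = w := by
      intro n hw
      obtain ⟨z, hz, hfz⟩ := hw
      have hex : ∃ z, z ∈ t n ∧ f z = w := ⟨z, hz, hfz⟩
      rw [hseldef]
      simp only [dif_pos hex]
      exact hex.choose_spec
    have hsum : (∑ n ∈ F, (S n).indicator (fun _ => (1:ℝ≥0∞)) w)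
        = ((F.filter (fun n => w ∈ S n)).card : ℝ≥0∞) := by
      rw [Finset.card_filter]
      push_cast
      refine Finset.sum_congr rfl fun n _ => ?_
      by_cases h : w ∈ S n <;> simp [Set.indicator, h]
    rw [hsum]
    have hcard : (F.filter (fun n => w ∈ S n)).card ≤ R.card := by
      refine Finset.card_le_card_of_injOn sel ?_ ?_
      · intro n hn
        obtain ⟨-, hw⟩ := Finset.mem_filter.mp hn
        obtain ⟨hz, hfz⟩ := hsel n hw
        rw [Finset.mem_coe, hRdef, Multiset.mem_toFinset, Polynomial.mem_roots hne]
        show Polynomial.eval (sel n) (P - Polynomial.C w) = 0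
        rw [Polynomial.eval_sub, Polynomial.eval_C,
          show Polynomial.eval (sel n) P = f (sel n) from rfl, hfz, sub_self]
      · intro a ha b hb hab
        by_contra hne'
        obtain ⟨-, hwa⟩ := Finset.mem_filter.mp (ha)
        obtain ⟨-, hwb⟩ := Finset.mem_filter.mp (hb)
        exact Set.disjoint_left.mp (htd hne') (hsel a hwa).1 (hab ▸ (hsel b hwb).1)
    exact_mod_cast le_trans (Nat.cast_le.mpr hcard) (Nat.cast_le.mpr hR)
  -- main lintegral estimate
  have key : ∫⁻ z : ℂ, ENNReal.ofReal (sphDeriv f z ^ 2) ≤ ENNReal.ofReal (m * Real.pi) := by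
    calc ∫⁻ z : ℂ, ENNReal.ofReal (sphDeriv f z ^ 2)
        = ∫⁻ z : ℂ, j z * gE (f z) := lintegral_congr hpoint
      _ = (∫⁻ z in A, j z * gE (f z)) + ∫⁻ z in Aᶜ, j z * gE (f z) :=
          (lintegral_add_compl _ hAmeas).symm
      _ = ∫⁻ z in Aᶜ, j z * gE (f z) := by
          have hzero : ∫⁻ z in A, j z * gE (f z) = 0 := by
            rw [← lintegral_zero (μ := volume.restrict A)]
            refine setLIntegral_congr_fun hAmeas (fun z hz => ?_)
            rw [hjdef]
            simp only
            rw [Set.mem_setOf_eq.mp hz]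
            simp
          rw [hzero, zero_add]
      _ ≤ ∫⁻ z in ⋃ n, t n, j z * gE (f z) := lintegral_mono_set hcover
      _ = ∑' n, ∫⁻ z in t n, j z * gE (f z) := lintegral_iUnion htm htd _
      _ = ∑' n, ∫⁻ w in S n, gE w := by
          refine tsum_congr fun n => ?_
          exact KL (t n) (htm n) ((huinj (e n)).mono (htsub n))
      _ = ∑' n, ∫⁻ w, (S n).indicator gE w := by
          refine tsum_congr fun n => ?_
          exact (lintegral_indicator (hSmeas n) _).symm
      _ = ∫⁻ w, ∑' n, (S n).indicator gE w :=
          (lintegral_tsum fun n => (measurable_gE.indicator (hSmeas n)).aemeasurable).symm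
      _ ≤ ∫⁻ w, (m : ℝ≥0∞) * gE w := by
          refine lintegral_mono fun w => ?_
          have h1 : ∀ n, (S n).indicator gE w
              = (S n).indicator (fun _ => (1:ℝ≥0∞)) w * gE w := by
            intro n
            by_cases h : w ∈ S n <;> simp [Set.indicator, h]
          rw [tsum_congr h1, ENNReal.tsum_mul_right]
          exact mul_le_mul_left (hcount w) _
      _ = (m : ℝ≥0∞) * ∫⁻ w, gE w := lintegral_const_mul _ measurable_gE
      _ = ENNReal.ofReal (m * Real.pi) := by
          rw [lintegral_gE, ← ENNReal.ofReal_natCast m,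
            ← ENNReal.ofReal_mul (by positivity)]
  have h0 : 0 ≤ᵐ[volume] fun z : ℂ => sphDeriv f z ^ 2 :=
    Filter.Eventually.of_forall fun z => sq_nonneg _
  rw [integral_eq_lintegral_of_nonneg_ae h0 hcont.aestronglyMeasurable]
  refine ENNReal.toReal_le_of_le_ofReal (by positivity) key
end
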